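/- Let α > 0, let k : ℝ → ℝ be 2π-periodic with k ≥ 1, and let η₁, η₂ : ℝ → ℝ be differentiable 2π-periodic functions satisfying η₁′ = −α k η₂ and η₂′ = α k η₁ on ℝ. Define f(z) = |z|^α (η₁(θ) + i η₂(θ)) for z = ρ e^{iθ} ≠ 0. Then for every z = ρ e^{iθ} ≠ 0, the Jacobian determinant satisfies J_f(z) = det Df(z) = α² k(θ) ρ^{2(α−1)} (η₁(θ)² + η₂(θ)²). -/

import Mathlib

open Complex

lemma det_eq_aux (T : ℂ →ₗ[ℝ] ℂ) :
    LinearMap.det T = (T 1).re * (T Complex.I).im - (T 1).im * (T Complex.I).re := by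
  rw [← LinearMap.det_toMatrix Complex.basisOneI, Matrix.det_fin_two]
  simp [LinearMap.toMatrix_apply, Complex.coe_basisOneI_repr, Complex.coe_basisOneI]
  ring

/-- For `α > 0`, `k ≥ 1` a `2π`-periodic function and `η₁, η₂`
differentiable `2π`-periodic functions satisfying `η₁′ = −α k η₂`, `η₂′ = α k η₁`,
the map `f(z) = |z|^α (η₁(arg z) + i η₂(arg z))` satisfies, at every `z ≠ 0` with
`θ = arg z` and `ρ = |z|`,
`J_f(z) = det Df(z) = α² k(θ) ρ^{2(α−1)} (η₁(θ)² + η₂(θ)²)`. -/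
theorem jacobian_generalized_stretching (α : ℝ) (hα : 0 < α)
    (k η₁ η₂ : ℝ → ℝ)
    (hk1 : ∀ θ, 1 ≤ k θ) (hkper : Function.Periodic k (2 * Real.pi))
    (hη₁per : Function.Periodic η₁ (2 * Real.pi))
    (hη₂per : Function.Periodic η₂ (2 * Real.pi))
    (hη₁ : ∀ θ : ℝ, HasDerivAt η₁ (-(α * k θ * η₂ θ)) θ)
    (hη₂ : ∀ θ : ℝ, HasDerivAt η₂ (α * k θ * η₁ θ) θ)
    (f : ℂ → ℂ)
    (hf : ∀ z : ℂ, f z =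
      (↑(‖z‖ ^ α) : ℂ) * (↑(η₁ z.arg) + ↑(η₂ z.arg) * Complex.I)) :
    ∀ z : ℂ, z ≠ 0 → DifferentiableAt ℝ f z ∧
      LinearMap.det (fderiv ℝ f z : ℂ →ₗ[ℝ] ℂ) =
        α ^ 2 * k z.arg * ‖z‖ ^ (2 * (α - 1)) *
          (η₁ z.arg ^ 2 + η₂ z.arg ^ 2) := by
  intro z hz
  set θ := z.arg with hθ
  set ρ := ‖z‖ with hρdef
  have hρ : 0 < ρ := norm_pos_iff.mpr hz
  set c : ℂ := (ρ : ℂ) / z with hcdef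
  have hc0 : c ≠ 0 := div_ne_zero (by exact_mod_cast hρ.ne') hz
  have hzc : z * c = (ρ : ℂ) := by rw [hcdef]; field_simp
  -- the local smooth representative
  set G : ℂ → ℂ := fun u =>
    ((Real.exp (α * u.re) : ℝ) : ℂ) *
      (((η₁ (θ + u.im) : ℝ) : ℂ) + ((η₂ (θ + u.im) : ℝ) : ℂ) * Complex.I) with hGdef
  set g : ℂ → ℂ := fun w => G (Complex.log (w * c)) with hgdef
  -- f = g on nonzero complexes
  have hfg : ∀ w : ℂ, w ≠ 0 → f w = g w := by
    intro w hw
    have hwc : w * c ≠ 0 := mul_ne_zero hw hc0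
    have hre : (Complex.log (w * c)).re = Real.log (‖w‖) := by
      rw [Complex.log_re, norm_mul]
      have : ‖c‖ = 1 := by
        simp [hcdef, norm_div, Complex.norm_real, Real.norm_eq_abs, abs_of_pos hρ, hρ.ne', ← hρdef]
      rw [this, mul_one]
    have him : (Complex.log (w * c)).im = (w * c).arg := Complex.log_im _
    -- angle computation
    have hangle : ∃ n : ℤ, θ + (w * c).arg = w.arg + 2 * Real.pi * n := by
      have h1 : ((θ + (w * c).arg : ℝ) : Real.Angle) = (w.arg : Real.Angle) := by
        push_cast [Real.Angle.coe_add]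
        rw [Complex.arg_mul_coe_angle hw hc0, hcdef, div_eq_mul_inv,
          Complex.arg_mul_coe_angle (by exact_mod_cast hρ.ne') (inv_ne_zero hz),
          Complex.arg_inv_coe_angle, Complex.arg_ofReal_of_nonneg hρ.le]
        simp
        rw [hθ]; abel
      rw [Real.Angle.angle_eq_iff_two_pi_dvd_sub] at h1
      obtain ⟨n, hn⟩ := h1
      exact ⟨n, by linarith⟩
    obtain ⟨n, hn⟩ := hangle
    have hper1 : η₁ (θ + (w * c).arg) = η₁ w.arg := by
      rw [hn, show 2 * Real.pi * (n : ℝ) = (n : ℝ) * (2 * Real.pi) by ring]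
      exact (hη₁per.int_mul n) w.arg
    have hper2 : η₂ (θ + (w * c).arg) = η₂ w.arg := by
      rw [hn, show 2 * Real.pi * (n : ℝ) = (n : ℝ) * (2 * Real.pi) by ring]
      exact (hη₂per.int_mul n) w.arg
    have habs : Real.exp (α * (Complex.log (w * c)).re) = ‖w‖ ^ α := by
      rw [hre, Real.rpow_def_of_pos (norm_pos_iff.mpr hw), mul_comm]
    rw [hf w, hgdef]
    simp only [hGdef, him, hper1, hper2, habs]
  -- derivative of the inner log map
  have hL : HasDerivAt (fun w : ℂ => Complex.log (w * c)) z⁻¹ z := by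
    have h1 : HasDerivAt (fun w : ℂ => w * c) c z := hasDerivAt_mul_const c
    have h2 : HasDerivAt Complex.log (z * c)⁻¹ (z * c) := by
      apply Complex.hasDerivAt_log
      rw [hzc]
      exact Complex.mem_slitPlane_iff.2 (Or.inl (by simpa using hρ))
    have := h2.comp z h1
    refine this.congr_deriv ?_
    rw [hzc, hcdef]
    have : ((ρ:ℂ)) ≠ 0 := by exact_mod_cast hρ.ne'
    field_simp
  set u₀ : ℂ := Complex.log (z * c) with hu₀def
  have hu₀re : u₀.re = Real.log ρ := by
    rw [hu₀def, hzc, Complex.log_re, Complex.norm_real, Real.norm_eq_abs, abs_of_pos hρ]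
  have hu₀im : u₀.im = 0 := by
    rw [hu₀def, hzc, Complex.log_im, Complex.arg_ofReal_of_nonneg hρ.le]
  -- derivative of G at u₀
  have hA : HasFDerivAt (fun u : ℂ => ((Real.exp (α * u.re) : ℝ) : ℂ))
      (Complex.ofRealCLM.comp ((Real.exp (α * u₀.re)) • (α • Complex.reCLM))) u₀ := by
    have h1 : HasFDerivAt (fun u : ℂ => α * u.re) (α • Complex.reCLM) u₀ :=
      Complex.reCLM.hasFDerivAt.const_mul α
    have h2 : HasFDerivAt (fun u : ℂ => Real.exp (α * u.re))
        ((Real.exp (α * u₀.re)) • (α • Complex.reCLM)) u₀ :=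
      by have := (Real.hasDerivAt_exp (α * u₀.re)).comp_hasFDerivAt u₀ h1; exact this
    exact Complex.ofRealCLM.hasFDerivAt.comp u₀ h2
  have him' : θ + u₀.im = θ := by rw [hu₀im, add_zero]
  have hB₁ : HasFDerivAt (fun u : ℂ => ((η₁ (θ + u.im) : ℝ) : ℂ))
      (Complex.ofRealCLM.comp ((-(α * k θ * η₂ θ)) • Complex.imCLM)) u₀ := by
    have h0 : HasFDerivAt (fun u : ℂ => θ + u.im) Complex.imCLM u₀ :=
      Complex.imCLM.hasFDerivAt.const_add θ
    have h1 := (hη₁ (θ + u₀.im)).comp_hasFDerivAt u₀ h0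
    rw [him'] at h1
    exact Complex.ofRealCLM.hasFDerivAt.comp u₀ h1
  have hB₂ : HasFDerivAt (fun u : ℂ => ((η₂ (θ + u.im) : ℝ) : ℂ))
      (Complex.ofRealCLM.comp ((α * k θ * η₁ θ) • Complex.imCLM)) u₀ := by
    have h0 : HasFDerivAt (fun u : ℂ => θ + u.im) Complex.imCLM u₀ :=
      Complex.imCLM.hasFDerivAt.const_add θ
    have h1 := (hη₂ (θ + u₀.im)).comp_hasFDerivAt u₀ h0
    rw [him'] at h1
    exact Complex.ofRealCLM.hasFDerivAt.comp u₀ h1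
  have hB := hB₁.add (hB₂.mul_const Complex.I)
  have hG := hA.mul hB
  have hg := hG.comp z (hL.hasFDerivAt.restrictScalars ℝ)
  have hEq : f =ᶠ[nhds z] g :=
    Filter.eventuallyEq_of_mem (isOpen_compl_singleton.mem_nhds hz) fun w hw => hfg w hw
  have hgd : HasFDerivAt g _ z := hg
  refine ⟨hEq.differentiableAt_iff.2 hgd.differentiableAt, ?_⟩
  rw [hEq.fderiv_eq, hgd.fderiv, det_eq_aux]
  simp only [ContinuousLinearMap.coe_coe, ContinuousLinearMap.coe_comp', Function.comp_apply,
    ContinuousLinearMap.coe_restrictScalars', ContinuousLinearMap.smulRight_apply,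
    ContinuousLinearMap.one_apply, ContinuousLinearMap.add_apply, ContinuousLinearMap.coe_smul',
    Pi.smul_apply, Complex.ofRealCLM_apply, Complex.reCLM_apply, Complex.imCLM_apply,
    smul_eq_mul, one_smul, Complex.real_smul, ContinuousLinearMap.toSpanSingleton_apply,
    Pi.add_apply]
  rw [him', hu₀re]
  set P := Real.exp (α * Real.log ρ) with hPdef
  have hP : P = ρ ^ α := by rw [hPdef, Real.rpow_def_of_pos hρ, mul_comm]
  have hn : z.re * z.re + z.im * z.im = ρ ^ 2 := by
    rw [hρdef, Complex.sq_norm, Complex.normSq_apply]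
  have hne : z.re * z.re + z.im * z.im ≠ 0 := by
    rw [hn]; positivity
  have hrpow : ρ ^ (2 * (α - 1)) = P ^ 2 / ρ ^ 2 := by
    rw [hP, ← Real.rpow_natCast (ρ ^ α) 2, ← Real.rpow_mul hρ.le, ← Real.rpow_natCast ρ 2,
      ← Real.rpow_sub hρ]
    congr 1
    push_cast
    ring
  rw [hrpow]
  simp only [one_mul, Complex.inv_re, Complex.inv_im, Complex.normSq_apply, Complex.mul_re,
    Complex.mul_im, Complex.add_re, Complex.add_im, Complex.I_re, Complex.I_im,
    Complex.ofReal_re, Complex.ofReal_im]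
  rw [← hn]
  have hne' : z.im ^ 2 + z.re ^ 2 ≠ 0 := by
    intro h; apply hne; linear_combination h
  field_simp
  have hinv : (z.im ^ 2 + z.re ^ 2) * (z.im ^ 2 + z.re ^ 2)⁻¹ = 1 := mul_inv_cancel₀ hne'
  linear_combination (P ^ 2 * α ^ 2 * k θ * (η₁ θ ^ 2 + η₂ θ ^ 2) * (z.im ^ 2 + z.re ^ 2)⁻¹) * hinv
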